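/- Let h : [0,L] → ℝ be continuous and positive, and let f : [0,L] → ℝ be continuously differentiable. Set R := ∫_0^L h(s)^{-1} ds. Then f(0)² ≤ 2R ( (1/L²) ∫_0^L f(t)² h(t) dt + ∫_0^L f'(t)² h(t) dt ). -/

import Mathlib

open MeasureTheory intervalIntegral

/-- Cauchy–Schwarz for interval integrals of continuous functions. -/
lemma cs_interval_aux {a b : ℝ} (hab : a ≤ b) {u v : ℝ → ℝ}
    (hu : ContinuousOn u (Set.Icc a b)) (hv : ContinuousOn v (Set.Icc a b)) :
    (∫ t in a..b, u t * v t) ^ 2 ≤ (∫ t in a..b, u t ^ 2) * (∫ t in a..b, v t ^ 2) := by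
  have huIcc : Set.uIcc a b = Set.Icc a b := Set.uIcc_of_le hab
  have hint : ∀ {g : ℝ → ℝ}, ContinuousOn g (Set.Icc a b) →
      IntervalIntegrable g volume a b := by
    intro g hg
    exact (huIcc ▸ hg : ContinuousOn g (Set.uIcc a b)).intervalIntegrable
  have hiuv : IntervalIntegrable (fun t => u t * v t) volume a b := hint (hu.mul hv)
  have hiu2 : IntervalIntegrable (fun t => u t ^ 2) volume a b := hint (hu.pow 2)
  have hiv2 : IntervalIntegrable (fun t => v t ^ 2) volume a b := hint (hv.pow 2)
  set A : ℝ := ∫ t in a..b, v t ^ 2 with hA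
  set B : ℝ := ∫ t in a..b, u t * v t with hB
  set C : ℝ := ∫ t in a..b, u t ^ 2 with hC
  have hA0 : 0 ≤ A := integral_nonneg hab fun t _ => sq_nonneg _
  have hC0 : 0 ≤ C := integral_nonneg hab fun t _ => sq_nonneg _
  have key : ∀ l : ℝ, 0 ≤ C - 2 * l * B + l ^ 2 * A := by
    intro l
    have hexp : ∫ t in a..b, (u t - l * v t) ^ 2 = C - 2 * l * B + l ^ 2 * A := by
      have : ∀ t, (u t - l * v t) ^ 2
          = u t ^ 2 - (2 * l) * (u t * v t) + l ^ 2 * v t ^ 2 := by intro t; ring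
      simp_rw [this]
      rw [intervalIntegral.integral_add ((hiu2).sub (hiuv.const_mul _))
          (hiv2.const_mul _), intervalIntegral.integral_sub hiu2 (hiuv.const_mul _),
          intervalIntegral.integral_const_mul, intervalIntegral.integral_const_mul]
    have hnn : 0 ≤ ∫ t in a..b, (u t - l * v t) ^ 2 :=
      integral_nonneg hab fun t _ => sq_nonneg _
    linarith [hexp ▸ hnn]
  rcases eq_or_lt_of_le hA0 with hAz | hApos
  · -- A = 0 : then for all l, 0 ≤ C - 2 l B, forcing B = 0
    have hB0 : B = 0 := by
      by_contra hBne
      have h1 := key ((C + 1) / (2 * B))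
      have h2 := key (-((C + 1) / (2 * B)))
      rw [← hAz] at h1 h2
      rcases lt_or_gt_of_ne hBne with hBlt | hBgt
      · have : 2 * (-((C + 1) / (2 * B))) * B = -(C + 1) := by field_simp
        rw [this] at h2; linarith
      · have : 2 * ((C + 1) / (2 * B)) * B = C + 1 := by field_simp
        rw [this] at h1; linarith
    rw [hB0, ← hAz]; simp [hC0]
  · have := key (B / A)
    have h2 : (B / A) ^ 2 * A = B ^ 2 / A := by field_simp
    have h3 : 2 * (B / A) * B = 2 * (B ^ 2) / A := by field_simp
    rw [h2, h3] at this
    have h4 : B ^ 2 / A ≤ C := by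
      have : 2 * B ^ 2 / A - B ^ 2 / A = B ^ 2 / A := by ring
      linarith
    calc B ^ 2 = B ^ 2 / A * A := by field_simp
    _ ≤ C * A := mul_le_mul_of_nonneg_right h4 hA0

/-- Trace inequality along a ray with the `L²` mass term scaled by `1/L²`,
with constant given by the resistance `R = ∫₀ᴸ h⁻¹`. -/
theorem trace_inequality_ray_resistance (L : ℝ) (hL : 0 < L)
    (h : ℝ → ℝ) (hc : ContinuousOn h (Set.Icc (0 : ℝ) L))
    (hpos : ∀ t ∈ Set.Icc (0 : ℝ) L, 0 < h t)
    (f f' : ℝ → ℝ)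
    (hderiv : ∀ t ∈ Set.Icc (0 : ℝ) L, HasDerivAt f (f' t) t)
    (hcont : ContinuousOn f' (Set.Icc (0 : ℝ) L)) :
    (f 0) ^ 2 ≤
      2 * (∫ s in (0 : ℝ)..L, (h s)⁻¹) *
        ((1 / L ^ 2) * (∫ t in (0 : ℝ)..L, (f t) ^ 2 * h t) +
          ∫ t in (0 : ℝ)..L, (f' t) ^ 2 * h t) := by
  have hIcc : Set.uIcc (0 : ℝ) L = Set.Icc 0 L := Set.uIcc_of_le hL.le
  -- basic continuity facts
  have hfc : ContinuousOn f (Set.Icc (0 : ℝ) L) := fun t ht =>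
    (hderiv t ht).continuousAt.continuousWithinAt
  have hinvc : ContinuousOn (fun s => (h s)⁻¹) (Set.Icc (0 : ℝ) L) :=
    hc.inv₀ fun t ht => (hpos t ht).ne'
  have hsqrtc : ContinuousOn (fun s => Real.sqrt (h s)) (Set.Icc (0 : ℝ) L) :=
    Real.continuous_sqrt.comp_continuousOn hc
  have hsqrtinvc : ContinuousOn (fun s => Real.sqrt ((h s)⁻¹)) (Set.Icc (0 : ℝ) L) :=
    Real.continuous_sqrt.comp_continuousOn hinvc
  have hint : ∀ {g : ℝ → ℝ}, ContinuousOn g (Set.Icc (0 : ℝ) L) →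
      IntervalIntegrable g volume 0 L := by
    intro g hg
    exact (hIcc ▸ hg : ContinuousOn g (Set.uIcc (0 : ℝ) L)).intervalIntegrable
  set R : ℝ := ∫ s in (0 : ℝ)..L, (h s)⁻¹ with hRdef
  set H : ℝ := ∫ s in (0 : ℝ)..L, h s with hHdef
  set M1 : ℝ := ∫ t in (0 : ℝ)..L, (f t) ^ 2 * h t with hM1def
  set M2 : ℝ := ∫ t in (0 : ℝ)..L, (f' t) ^ 2 * h t with hM2def
  have hR : 0 < R :=
    intervalIntegral_pos_of_pos_on (hint hinvc)
      (fun x hx => inv_pos.2 (hpos x ⟨hx.1.le, hx.2.le⟩)) hL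
  have hH : 0 < H :=
    intervalIntegral_pos_of_pos_on (hint hc)
      (fun x hx => hpos x ⟨hx.1.le, hx.2.le⟩) hL
  have hM2nn : 0 ≤ M2 :=
    integral_nonneg hL.le fun t ht => mul_nonneg (sq_nonneg _) (hpos t ht).le
  -- Cauchy–Schwarz : L² ≤ H * R
  have cs1 : L ^ 2 ≤ H * R := by
    have := cs_interval_aux hL.le hsqrtc hsqrtinvc
    have e1 : (∫ t in (0 : ℝ)..L, Real.sqrt (h t) * Real.sqrt ((h t)⁻¹)) = L := by
      rw [intervalIntegral.integral_congr (g := fun _ => (1 : ℝ)) ?_]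
      · simp
      · intro t ht
        rw [hIcc] at ht
        have hp := hpos t ht
        simp only
        rw [Real.sqrt_inv, mul_inv_cancel₀ (Real.sqrt_ne_zero'.2 hp)]
    have e2 : (∫ t in (0 : ℝ)..L, Real.sqrt (h t) ^ 2) = H := by
      rw [hHdef]
      refine intervalIntegral.integral_congr fun t ht => ?_
      rw [hIcc] at ht
      exact Real.sq_sqrt (hpos t ht).le
    have e3 : (∫ t in (0 : ℝ)..L, Real.sqrt ((h t)⁻¹) ^ 2) = R := by
      rw [hRdef]
      refine intervalIntegral.integral_congr fun t ht => ?_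
      rw [hIcc] at ht
      exact Real.sq_sqrt (inv_pos.2 (hpos t ht)).le
    rw [e1, e2, e3] at this
    exact this
  -- minimum point of f² on [0, L]
  obtain ⟨t₀, ht₀, hmin⟩ := isCompact_Icc.exists_isMinOn (Set.nonempty_Icc.2 hL.le)
    (hfc.pow 2)
  have hmin' : ∀ t ∈ Set.Icc (0 : ℝ) L, f t₀ ^ 2 ≤ f t ^ 2 := fun t ht => hmin ht
  -- f t₀ ² * H ≤ M1
  have step1 : f t₀ ^ 2 * H ≤ M1 := by
    have : f t₀ ^ 2 * H = ∫ t in (0 : ℝ)..L, f t₀ ^ 2 * h t := by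
      rw [intervalIntegral.integral_const_mul]
    rw [this]
    refine intervalIntegral.integral_mono_on hL.le
      (hint (continuousOn_const.mul hc)) (hint ((hfc.pow 2).mul hc)) fun t ht => ?_
    exact mul_le_mul_of_nonneg_right (hmin' t ht) (hpos t ht).le
  -- FTC : ∫₀^{t₀} f' = f t₀ - f 0
  have hsub : Set.Icc (0 : ℝ) t₀ ⊆ Set.Icc 0 L := Set.Icc_subset_Icc le_rfl ht₀.2
  have ftc : (∫ t in (0 : ℝ)..t₀, f' t) = f t₀ - f 0 := by
    refine intervalIntegral.integral_eq_sub_of_hasDerivAt (fun t ht => ?_) ?_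
    · exact hderiv t (hsub (Set.uIcc_of_le ht₀.1 ▸ ht))
    · exact ((hcont.mono hsub).mono
        (by rw [Set.uIcc_of_le ht₀.1])).intervalIntegrable
  -- (f t₀ - f 0)² ≤ R * M2
  have step3 : (f t₀ - f 0) ^ 2 ≤ R * M2 := by
    rw [← ftc]
    have cs2 : (∫ t in (0 : ℝ)..t₀, f' t) ^ 2 ≤
        (∫ t in (0 : ℝ)..t₀, (f' t) ^ 2 * h t) * (∫ t in (0 : ℝ)..t₀, (h t)⁻¹) := by
      have hu : ContinuousOn (fun t => f' t * Real.sqrt (h t)) (Set.Icc (0 : ℝ) t₀) :=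
        (hcont.mono hsub).mul (hsqrtc.mono hsub)
      have hv : ContinuousOn (fun t => Real.sqrt ((h t)⁻¹)) (Set.Icc (0 : ℝ) t₀) :=
        hsqrtinvc.mono hsub
      have := cs_interval_aux ht₀.1 hu hv
      have e1 : (∫ t in (0 : ℝ)..t₀, f' t * Real.sqrt (h t) * Real.sqrt ((h t)⁻¹))
          = ∫ t in (0 : ℝ)..t₀, f' t := by
        refine intervalIntegral.integral_congr fun t ht => ?_
        rw [Set.uIcc_of_le ht₀.1] at ht
        have hp := hpos t (hsub ht)
        rw [Real.sqrt_inv, mul_assoc, mul_inv_cancel₀ (Real.sqrt_ne_zero'.2 hp), mul_one]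
      have e2 : (∫ t in (0 : ℝ)..t₀, (f' t * Real.sqrt (h t)) ^ 2)
          = ∫ t in (0 : ℝ)..t₀, (f' t) ^ 2 * h t := by
        refine intervalIntegral.integral_congr fun t ht => ?_
        rw [Set.uIcc_of_le ht₀.1] at ht
        have hp := hpos t (hsub ht)
        simp only [mul_pow, Real.sq_sqrt hp.le]
      have e3 : (∫ t in (0 : ℝ)..t₀, Real.sqrt ((h t)⁻¹) ^ 2)
          = ∫ t in (0 : ℝ)..t₀, (h t)⁻¹ := by
        refine intervalIntegral.integral_congr fun t ht => ?_
        rw [Set.uIcc_of_le ht₀.1] at ht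
        exact Real.sq_sqrt (inv_pos.2 (hpos t (hsub ht))).le
      rw [e1, e2, e3] at this
      exact this
    have m1 : (∫ t in (0 : ℝ)..t₀, (f' t) ^ 2 * h t) ≤ M2 := by
      refine intervalIntegral.integral_mono_interval le_rfl ht₀.1 ht₀.2 ?_
        (hint ((hcont.pow 2).mul hc))
      filter_upwards [ae_restrict_mem measurableSet_Ioc] with t ht
      exact mul_nonneg (sq_nonneg _) (hpos t ⟨ht.1.le, ht.2⟩).le
    have m2 : (∫ t in (0 : ℝ)..t₀, (h t)⁻¹) ≤ R := by
      refine intervalIntegral.integral_mono_interval le_rfl ht₀.1 ht₀.2 ?_ (hint hinvc)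
      filter_upwards [ae_restrict_mem measurableSet_Ioc] with t ht
      exact (inv_pos.2 (hpos t ⟨ht.1.le, ht.2⟩)).le
    have hI1nn : 0 ≤ ∫ t in (0 : ℝ)..t₀, (f' t) ^ 2 * h t :=
      integral_nonneg ht₀.1 fun t ht => mul_nonneg (sq_nonneg _) (hpos t (hsub ht)).le
    calc (∫ t in (0 : ℝ)..t₀, f' t) ^ 2
        ≤ (∫ t in (0 : ℝ)..t₀, (f' t) ^ 2 * h t) * (∫ t in (0 : ℝ)..t₀, (h t)⁻¹) := cs2
      _ ≤ M2 * R := by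
          apply mul_le_mul m1 m2 _ hM2nn
          exact integral_nonneg ht₀.1 fun t ht => (inv_pos.2 (hpos t (hsub ht))).le
      _ = R * M2 := mul_comm _ _
  -- assemble
  have key0 : f 0 ^ 2 ≤ 2 * f t₀ ^ 2 + 2 * (f t₀ - f 0) ^ 2 := by nlinarith [sq_nonneg (2 * f t₀ - f 0)]
  have hft0 : f t₀ ^ 2 * L ^ 2 ≤ R * M1 := by
    have h1 : f t₀ ^ 2 * L ^ 2 ≤ f t₀ ^ 2 * (H * R) :=
      mul_le_mul_of_nonneg_left cs1 (sq_nonneg _)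
    have h2 : f t₀ ^ 2 * H * R ≤ M1 * R := mul_le_mul_of_nonneg_right step1 hR.le
    calc f t₀ ^ 2 * L ^ 2 ≤ f t₀ ^ 2 * (H * R) := h1
      _ = f t₀ ^ 2 * H * R := by ring
      _ ≤ M1 * R := h2
      _ = R * M1 := mul_comm _ _
  have hL2 : (0 : ℝ) < L ^ 2 := by positivity
  rw [div_mul_eq_mul_div, one_mul]
  -- goal : f 0 ^2 ≤ 2 * R * (M1 / L^2 + M2)
  have expand : 2 * R * (M1 / L ^ 2 + M2) = 2 * (R * M1 / L ^ 2) + 2 * (R * M2) := by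
    ring
  rw [expand]
  have h5 : f t₀ ^ 2 ≤ R * M1 / L ^ 2 := (le_div_iff₀ hL2).2 hft0
  linarith [key0, h5, step3]
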